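/- Let k be a field, n ≥ 1, F the free group on generators t_1, …, t_n, Λ = MonoidAlgebra k F, ε : Λ → k the augmentation, and let D_i, D̄_i : Λ → Λ (i = 1, …, n) be the canonical Fox derivatives, i.e., the unique maps satisfying γ = ε(γ)·1 + Σ_i (t_i − 1)·D_i(γ) and γ = ε(γ)·1 + Σ_i (t_i^{-1} − 1)·D̄_i(γ) for all γ ∈ Λ. Then for every γ ∈ Λ, the k-subspace of Λ spanned by the set of all iterated Fox derivatives of γ — the values f(γ) where f ranges over all finite compositions of operators from {D_1, …, D_n, D̄_1, …, D̄_n}, including the identity (so γ itself is included) — is a finite-dimensional k-vector space. -/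

import Mathlib

/-- The augmentation map of the group algebra of the free group of rank `n`:
the `k`-algebra homomorphism sending every group element to `1`. -/
noncomputable def freeGroupAug (k : Type*) [CommRing k] (n : ℕ) :
    MonoidAlgebra k (FreeGroup (Fin n)) →ₐ[k] k :=
  MonoidAlgebra.lift k k (FreeGroup (Fin n)) 1

namespace Fox15

noncomputable section

open Submodule Pointwise

variable (k : Type*) [Field k] (n : ℕ)

/-- Shorthand for the group algebra. -/
abbrev L := MonoidAlgebra k (FreeGroup (Fin n))

/-- Shorthand for the canonical embedding of the free group. -/
abbrev og (g : FreeGroup (Fin n)) : L k n := MonoidAlgebra.of k (FreeGroup (Fin n)) g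

lemma og_one : og k n 1 = 1 := map_one (MonoidAlgebra.of k (FreeGroup (Fin n)))

lemma og_mul (g h : FreeGroup (Fin n)) : og k n (g * h) = og k n g * og k n h :=
  map_mul (MonoidAlgebra.of k (FreeGroup (Fin n))) g h

/-- The group used to define Fox derivatives: pairs of a group element together with the
values of all Fox derivatives (`Sum.inl` for the `D` family, `Sum.inr` for the `D̄` family). -/
@[ext]
structure G where
  g : FreeGroup (Fin n)
  d : Fin n ⊕ Fin n → L k n

instance : Group (G k n) where
  one := ⟨1, 0⟩
  mul x y := ⟨x.g * y.g, fun j => x.d j * og k n y.g + y.d j⟩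
  inv x := ⟨x.g⁻¹, fun j => -(x.d j * og k n x.g⁻¹)⟩
  mul_assoc x y z := by
    refine G.ext (mul_assoc _ _ _) (funext fun j => ?_)
    show (x.d j * og k n y.g + y.d j) * og k n z.g + z.d j
        = x.d j * og k n (y.g * z.g) + (y.d j * og k n z.g + z.d j)
    rw [og_mul]
    noncomm_ring
  one_mul x := by
    refine G.ext (one_mul _) (funext fun j => ?_)
    show (0 : Fin n ⊕ Fin n → L k n) j * og k n x.g + x.d j = x.d j
    rw [Pi.zero_apply, zero_mul, zero_add]
  mul_one x := by
    refine G.ext (mul_one _) (funext fun j => ?_)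
    show x.d j * og k n (1 : FreeGroup (Fin n)) + (0 : Fin n ⊕ Fin n → L k n) j = x.d j
    rw [og_one, mul_one, Pi.zero_apply, add_zero]
  inv_mul_cancel x := by
    refine G.ext (inv_mul_cancel _) (funext fun j => ?_)
    show -(x.d j * og k n x.g⁻¹) * og k n x.g + x.d j = (0 : Fin n ⊕ Fin n → L k n) j
    rw [neg_mul, mul_assoc, ← og_mul, inv_mul_cancel, og_one, mul_one, Pi.zero_apply]
    exact neg_add_cancel _

@[simp] lemma one_g : (1 : G k n).g = 1 := rfl
@[simp] lemma one_d (j) : (1 : G k n).d j = 0 := rfl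
@[simp] lemma mul_g (x y : G k n) : (x * y).g = x.g * y.g := rfl
@[simp] lemma mul_d (x y : G k n) (j) : (x * y).d j = x.d j * og k n y.g + y.d j := rfl
@[simp] lemma inv_g (x : G k n) : (x⁻¹).g = x.g⁻¹ := rfl
@[simp] lemma inv_d (x : G k n) (j) : (x⁻¹).d j = -(x.d j * og k n x.g⁻¹) := rfl

/-- The image of a generator. -/
def gen (i : Fin n) : G k n :=
  ⟨FreeGroup.of i,
    Sum.elim (fun j => if j = i then 1 else 0)
      (fun j => if j = i then -(og k n (FreeGroup.of i)) else 0)⟩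

/-- The universal homomorphism computing all Fox derivatives of group elements. -/
def Phi : FreeGroup (Fin n) →* G k n := FreeGroup.lift (gen k n)

@[simp] lemma Phi_of (i : Fin n) : Phi k n (FreeGroup.of i) = gen k n i :=
  FreeGroup.lift_apply_of

@[simp] lemma Phi_g (x : FreeGroup (Fin n)) : (Phi k n x).g = x := by
  induction x using FreeGroup.induction_on with
  | C1 => simp
  | of i => rw [Phi_of]; rfl
  | inv_of i ih => rw [map_inv, inv_g, ih]
  | mul x y hx hy => rw [map_mul, mul_g, hx, hy]

/-- The Fox derivatives, as linear maps on the group algebra. -/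
def fox (j : Fin n ⊕ Fin n) : L k n →ₗ[k] L k n :=
  Finsupp.linearCombination k (fun g => (Phi k n g).d j) ∘ₗ
    (MonoidAlgebra.coeffLinearEquiv k).toLinearMap

@[simp] lemma fox_single (j) (g : FreeGroup (Fin n)) (c : k) :
    fox k n j (MonoidAlgebra.single g c) = c • (Phi k n g).d j :=
  Finsupp.linearCombination_single k c g

@[simp] lemma fox_of (j) (g : FreeGroup (Fin n)) :
    fox k n j (og k n g) = (Phi k n g).d j := by
  have h : og k n g = (MonoidAlgebra.single g (1 : k) : L k n) :=
    MonoidAlgebra.of_apply k (FreeGroup (Fin n)) g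
  rw [h, fox_single, one_smul]

@[simp] lemma aug_single (g : FreeGroup (Fin n)) (c : k) :
    freeGroupAug k n (MonoidAlgebra.single g c) = c := by
  simp [freeGroupAug, MonoidAlgebra.lift_single]

@[simp] lemma aug_of (g : FreeGroup (Fin n)) : freeGroupAug k n (og k n g) = 1 := by
  have h : og k n g = (MonoidAlgebra.single g (1 : k) : L k n) :=
    MonoidAlgebra.of_apply k (FreeGroup (Fin n)) g
  rw [h, aug_single]

lemma og_mul_og (g h : FreeGroup (Fin n)) : og k n g * og k n h = og k n (g * h) :=
  (og_mul k n g h).symm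

lemma og_mul_og_inv (g : FreeGroup (Fin n)) : og k n g * og k n g⁻¹ = 1 := by
  rw [og_mul_og, mul_inv_cancel, og_one]

lemma og_inv_mul_og (g : FreeGroup (Fin n)) : og k n g⁻¹ * og k n g = 1 := by
  rw [og_mul_og, inv_mul_cancel, og_one]

/-- The two defining identities, on the level of the group `G`. -/
def P (x : G k n) : Prop :=
  (og k n x.g = 1 + ∑ i : Fin n, (og k n (FreeGroup.of i) - 1) * x.d (Sum.inl i)) ∧
  (og k n x.g = 1 + ∑ i : Fin n, (og k n (FreeGroup.of i)⁻¹ - 1) * x.d (Sum.inr i))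

lemma P_one : P k n 1 := by
  constructor <;>
    simp only [one_g, one_d, mul_zero, Finset.sum_const_zero, add_zero, og_one]

lemma P_gen (i : Fin n) : P k n (gen k n i) := by
  constructor
  · show og k n (FreeGroup.of i)
        = 1 + ∑ j : Fin n, (og k n (FreeGroup.of j) - 1) * if j = i then 1 else 0
    simp [mul_ite, Finset.sum_ite_eq']
  · show og k n (FreeGroup.of i)
        = 1 + ∑ j : Fin n, (og k n (FreeGroup.of j)⁻¹ - 1)
            * if j = i then -og k n (FreeGroup.of i) else 0
    simp only [mul_ite, mul_zero, Finset.sum_ite_eq', Finset.mem_univ, if_true]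
    rw [mul_neg, sub_mul, one_mul, og_inv_mul_og, neg_sub, add_comm, sub_add_cancel]

/-- Auxiliary computation for products. -/
lemma mul_aux (c a b : Fin n → L k n) (g h : FreeGroup (Fin n))
    (hg : og k n g = 1 + ∑ i : Fin n, c i * a i)
    (hh : og k n h = 1 + ∑ i : Fin n, c i * b i) :
    og k n (g * h) = 1 + ∑ i : Fin n, c i * (a i * og k n h + b i) := by
  have expand : ∀ i : Fin n, c i * (a i * og k n h + b i)
      = (c i * a i) * og k n h + c i * b i := fun i => by rw [mul_add, mul_assoc]
  rw [Finset.sum_congr rfl fun i _ => expand i, Finset.sum_add_distrib, ← Finset.sum_mul,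
    ← og_mul_og, hg, hh]
  noncomm_ring

/-- Auxiliary computation for inverses. -/
lemma inv_aux (c a : Fin n → L k n) (g : FreeGroup (Fin n))
    (hg : og k n g = 1 + ∑ i : Fin n, c i * a i) :
    og k n g⁻¹ = 1 + ∑ i : Fin n, c i * -(a i * og k n g⁻¹) := by
  have hs : ∑ i : Fin n, c i * a i = og k n g - 1 := eq_sub_of_add_eq' hg.symm
  have expand : ∀ i : Fin n, c i * -(a i * og k n g⁻¹)
      = -((c i * a i) * og k n g⁻¹) := fun i => by rw [mul_neg, mul_assoc]
  rw [Finset.sum_congr rfl fun i _ => expand i, Finset.sum_neg_distrib, ← Finset.sum_mul,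
    hs, sub_mul, one_mul, og_mul_og_inv]
  abel

lemma P_mul {x y : G k n} (hx : P k n x) (hy : P k n y) : P k n (x * y) := by
  constructor
  · have := mul_aux k n _ _ _ _ _ hx.1 hy.1
    simpa using this
  · have := mul_aux k n _ _ _ _ _ hx.2 hy.2
    simpa using this

lemma P_inv {x : G k n} (hx : P k n x) : P k n x⁻¹ := by
  constructor
  · have := inv_aux k n _ _ _ hx.1
    simpa using this
  · have := inv_aux k n _ _ _ hx.2
    simpa using this

lemma P_Phi (g : FreeGroup (Fin n)) : P k n (Phi k n g) := by
  induction g using FreeGroup.induction_on with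
  | C1 => rw [map_one]; exact P_one k n
  | of i =>
      rw [Phi_of]
      exact P_gen k n i
  | inv_of i ih => rw [map_inv]; exact P_inv k n ih
  | mul x y hx hy => rw [map_mul]; exact P_mul k n hx hy

/-- The first defining identity, for the canonical derivatives `fox (Sum.inl i)`. -/
lemma keyD (γ : L k n) :
    γ = freeGroupAug k n γ • (1 : L k n)
      + ∑ i : Fin n, (og k n (FreeGroup.of i) - 1) * fox k n (Sum.inl i) γ := by
  induction γ using MonoidAlgebra.induction_on with
  | of g =>
      have := (P_Phi k n g).1
      rw [Phi_g] at this
      simpa using this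
  | add f g hf hg =>
      conv_lhs => rw [hf, hg]
      rw [map_add]
      simp only [map_add, mul_add, Finset.sum_add_distrib, add_smul]
      abel
  | smul r f hf =>
      simp only [map_smul, smul_assoc, mul_smul_comm, ← Finset.smul_sum, ← smul_add]
      rw [← hf]

/-- The second defining identity, for the canonical derivatives `fox (Sum.inr i)`. -/
lemma keyDb (γ : L k n) :
    γ = freeGroupAug k n γ • (1 : L k n)
      + ∑ i : Fin n, (og k n (FreeGroup.of i)⁻¹ - 1) * fox k n (Sum.inr i) γ := by
  induction γ using MonoidAlgebra.induction_on with
  | of g =>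
      have := (P_Phi k n g).2
      rw [Phi_g] at this
      simpa using this
  | add f g hf hg =>
      conv_lhs => rw [hf, hg]
      rw [map_add]
      simp only [map_add, mul_add, Finset.sum_add_distrib, add_smul]
      abel
  | smul r f hf =>
      simp only [map_smul, smul_assoc, mul_smul_comm, ← Finset.smul_sum, ← smul_add]
      rw [← hf]

/-- The product rule, special case of a group element on the left. -/
lemma fox_og_mul (j) (g : FreeGroup (Fin n)) (b : L k n) :
    fox k n j (og k n g * b) = (Phi k n g).d j * b + fox k n j b := by
  induction b using MonoidAlgebra.induction_on with
  | of h => rw [og_mul_og, fox_of, fox_of, map_mul, mul_d, Phi_g]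
  | add f₁ f₂ h₁ h₂ =>
      rw [mul_add, map_add, h₁, h₂, map_add, mul_add]
      abel
  | smul r f hf =>
      rw [mul_smul_comm, map_smul, hf, map_smul, smul_add, mul_smul_comm]

/-- The product rule for the canonical Fox derivatives. -/
lemma fox_mul (j) (a b : L k n) :
    fox k n j (a * b) = fox k n j a * b + freeGroupAug k n a • fox k n j b := by
  induction a using MonoidAlgebra.induction_on with
  | of g => rw [fox_og_mul, fox_of, aug_of, one_smul]
  | add f₁ f₂ h₁ h₂ =>
      rw [add_mul, map_add, h₁, h₂, map_add, map_add, add_mul, add_smul]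
      abel
  | smul r f hf =>
      rw [smul_mul_assoc, map_smul, hf]
      simp only [map_smul, smul_add, smul_mul_assoc, smul_assoc]

lemma aug_sub_one (g : FreeGroup (Fin n)) : freeGroupAug k n (og k n g - 1) = 0 := by
  rw [map_sub, aug_of, map_one, sub_self]

lemma fox_one (j) : fox k n j (1 : L k n) = 0 := by
  rw [← og_one k n, fox_of, map_one, one_d]

/-- Uniqueness: if a combination `∑ (tᵢ - 1) * aᵢ` vanishes then all `aᵢ` vanish. -/
lemma uniq1 (a : Fin n → L k n)
    (h : ∑ i : Fin n, (og k n (FreeGroup.of i) - 1) * a i = 0) (j : Fin n) : a j = 0 := by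
  have h2 := congrArg (fox k n (Sum.inr j)) h
  rw [map_sum, map_zero] at h2
  have hterm : ∀ i : Fin n, fox k n (Sum.inr j) ((og k n (FreeGroup.of i) - 1) * a i)
      = if j = i then -(og k n (FreeGroup.of i) * a i) else 0 := by
    intro i
    rw [fox_mul, aug_sub_one, zero_smul, add_zero, map_sub, fox_of, fox_one, sub_zero,
      Phi_of]
    show (if j = i then -og k n (FreeGroup.of i) else 0) * a i = _
    split_ifs
    · rw [neg_mul]
    · rw [zero_mul]
  rw [Finset.sum_congr rfl fun i _ => hterm i, Finset.sum_ite_eq] at h2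
  simp only [Finset.mem_univ, if_true, neg_eq_zero] at h2
  calc a j = (og k n (FreeGroup.of j)⁻¹ * og k n (FreeGroup.of j)) * a j := by
        rw [og_inv_mul_og, one_mul]
    _ = 0 := by rw [mul_assoc, h2, mul_zero]

/-- Uniqueness for the second family. -/
lemma uniq2 (a : Fin n → L k n)
    (h : ∑ i : Fin n, (og k n (FreeGroup.of i)⁻¹ - 1) * a i = 0) (j : Fin n) : a j = 0 := by
  have h2 := congrArg (fox k n (Sum.inl j)) h
  rw [map_sum, map_zero] at h2
  have hterm : ∀ i : Fin n, fox k n (Sum.inl j) ((og k n (FreeGroup.of i)⁻¹ - 1) * a i)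
      = if j = i then -(og k n (FreeGroup.of i)⁻¹ * a i) else 0 := by
    intro i
    rw [fox_mul, aug_sub_one, zero_smul, add_zero, map_sub, fox_of, fox_one, sub_zero,
      map_inv (Phi k n), Phi_of, inv_d]
    show -((if j = i then (1 : L k n) else 0) * og k n ((gen k n i).g)⁻¹) * a i = _
    show -((if j = i then (1 : L k n) else 0) * og k n (FreeGroup.of i)⁻¹) * a i = _
    split_ifs
    · rw [one_mul, neg_mul]
    · rw [zero_mul, neg_zero, zero_mul]
  rw [Finset.sum_congr rfl fun i _ => hterm i, Finset.sum_ite_eq] at h2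
  simp only [Finset.mem_univ, if_true, neg_eq_zero] at h2
  calc a j = (og k n (FreeGroup.of j) * og k n (FreeGroup.of j)⁻¹) * a j := by
        rw [og_mul_og_inv, one_mul]
    _ = 0 := by rw [mul_assoc, h2, mul_zero]

/-- A finiteness predicate: `γ` lies in a finite-dimensional subspace invariant under all
canonical Fox derivatives. -/
def Good (γ : L k n) : Prop :=
  ∃ S : Set (L k n), S.Finite ∧ γ ∈ span k S ∧
    ∀ j, ∀ x ∈ S, fox k n j x ∈ span k S

lemma good_mul {a b : L k n} (ha : Good k n a) (hb : Good k n b) : Good k n (a * b) := by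
  obtain ⟨S₁, h₁f, h₁m, h₁c⟩ := ha
  obtain ⟨S₂, h₂f, h₂m, h₂c⟩ := hb
  refine ⟨S₁ * S₂ ∪ S₂, (h₁f.mul h₂f).union h₂f, ?_, ?_⟩
  · have hm : a * b ∈ span k S₁ * span k S₂ := Submodule.mul_mem_mul h₁m h₂m
    rw [Submodule.span_mul_span] at hm
    exact span_mono Set.subset_union_left hm
  · rintro j x (hx | hx)
    · obtain ⟨s, hs, t, ht, rfl⟩ := hx
      rw [fox_mul]
      refine add_mem ?_ ?_
      · have hm : fox k n j s * t ∈ span k S₁ * span k S₂ :=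
          Submodule.mul_mem_mul (h₁c j s hs) (subset_span ht)
        rw [Submodule.span_mul_span] at hm
        exact span_mono Set.subset_union_left hm
      · exact smul_mem _ _ (span_mono Set.subset_union_right (h₂c j t ht))
    · exact span_mono Set.subset_union_right (h₂c j x hx)

lemma good_og (g : FreeGroup (Fin n)) : Good k n (og k n g) := by
  induction g using FreeGroup.induction_on with
  | C1 =>
      refine ⟨{1}, Set.finite_singleton _, ?_, ?_⟩
      · rw [og_one]; exact subset_span rfl
      · rintro j x rfl
        rw [fox_one]
        exact zero_mem _
  | of i =>
      refine ⟨{og k n (FreeGroup.of i), 1}, (Set.finite_singleton _).insert _, ?_, ?_⟩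
      · exact subset_span (Set.mem_insert _ _)
      · rintro j x (rfl | rfl)
        · rw [fox_of, Phi_of]
          rcases j with j | j
          · show (if j = i then (1 : L k n) else 0) ∈ _
            split_ifs
            · exact subset_span (Set.mem_insert_of_mem _ rfl)
            · exact zero_mem _
          · show (if j = i then -og k n (FreeGroup.of i) else 0) ∈ _
            split_ifs
            · exact neg_mem (subset_span (Set.mem_insert _ _))
            · exact zero_mem _
        · rw [fox_one]; exact zero_mem _
  | inv_of i _ =>
      refine ⟨{og k n (FreeGroup.of i)⁻¹, 1}, (Set.finite_singleton _).insert _, ?_, ?_⟩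
      · exact subset_span (Set.mem_insert _ _)
      · rintro j x (rfl | rfl)
        · rw [fox_of, map_inv (Phi k n), Phi_of, inv_d]
          show -((gen k n i).d j * og k n ((gen k n i).g)⁻¹) ∈ _
          rcases j with j | j
          · show -((if j = i then (1 : L k n) else 0) * og k n (FreeGroup.of i)⁻¹) ∈ _
            split_ifs
            · rw [one_mul]
              exact neg_mem (subset_span (Set.mem_insert _ _))
            · rw [zero_mul, neg_zero]; exact zero_mem _
          · show -((if j = i then -og k n (FreeGroup.of i) else 0)
                * og k n (FreeGroup.of i)⁻¹) ∈ _
            split_ifs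
            · rw [neg_mul, neg_neg, og_mul_og_inv]
              exact subset_span (Set.mem_insert_of_mem _ rfl)
            · rw [zero_mul, neg_zero]; exact zero_mem _
        · rw [fox_one]; exact zero_mem _
  | mul x y hx hy =>
      rw [og_mul]
      exact good_mul k n hx hy

lemma good_all (γ : L k n) : Good k n γ := by
  induction γ using MonoidAlgebra.induction_on with
  | of g => exact good_og k n g
  | add f g hf hg =>
      obtain ⟨S₁, h₁f, h₁m, h₁c⟩ := hf
      obtain ⟨S₂, h₂f, h₂m, h₂c⟩ := hg
      refine ⟨S₁ ∪ S₂, h₁f.union h₂f, ?_, ?_⟩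
      · exact add_mem (span_mono Set.subset_union_left h₁m)
          (span_mono Set.subset_union_right h₂m)
      · rintro j x (hx | hx)
        · exact span_mono Set.subset_union_left (h₁c j x hx)
        · exact span_mono Set.subset_union_right (h₂c j x hx)
  | smul r f hf =>
      obtain ⟨S, hSf, hSm, hSc⟩ := hf
      exact ⟨S, hSf, smul_mem _ _ hSm, hSc⟩

end

end Fox15

/-- For any maps `D i`, `Db i` satisfying the defining identities of the canonical Fox
derivatives, the `k`-subspace spanned by all iterated Fox derivatives of a free polynomial
`γ` (including `γ` itself, via the empty composition) is finite-dimensional. -/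
theorem stmt15 (k : Type*) [Field k] (n : ℕ) (hn : 1 ≤ n)
    (D Db : Fin n → MonoidAlgebra k (FreeGroup (Fin n)) → MonoidAlgebra k (FreeGroup (Fin n)))
    (hD : ∀ γ : MonoidAlgebra k (FreeGroup (Fin n)),
      γ = freeGroupAug k n γ • (1 : MonoidAlgebra k (FreeGroup (Fin n)))
        + ∑ i : Fin n,
            ((MonoidAlgebra.of k (FreeGroup (Fin n)) (FreeGroup.of i)
              : MonoidAlgebra k (FreeGroup (Fin n))) - 1) * D i γ)
    (hDb : ∀ γ : MonoidAlgebra k (FreeGroup (Fin n)),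
      γ = freeGroupAug k n γ • (1 : MonoidAlgebra k (FreeGroup (Fin n)))
        + ∑ i : Fin n,
            ((MonoidAlgebra.of k (FreeGroup (Fin n)) (FreeGroup.of i)⁻¹
              : MonoidAlgebra k (FreeGroup (Fin n))) - 1) * Db i γ)
    (γ : MonoidAlgebra k (FreeGroup (Fin n))) :
    FiniteDimensional k
      ↥(Submodule.span k
        { x : MonoidAlgebra k (FreeGroup (Fin n)) |
          ∃ L : List (MonoidAlgebra k (FreeGroup (Fin n)) → MonoidAlgebra k (FreeGroup (Fin n))),
            (∀ g ∈ L, (∃ i, g = D i) ∨ (∃ i, g = Db i)) ∧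
            x = L.foldl (fun y g => g y) γ }) := by
  classical
  -- The given maps agree with the canonical Fox derivatives.
  have hDeq : ∀ (i : Fin n) (y), D i y = Fox15.fox k n (Sum.inl i) y := by
    intro i y
    have h1 := hD y
    have h2 := Fox15.keyD k n y
    have h0 : ∑ j : Fin n, (Fox15.og k n (FreeGroup.of j) - 1)
        * (D j y - Fox15.fox k n (Sum.inl j) y) = 0 := by
      simp only [mul_sub, Finset.sum_sub_distrib]
      rw [sub_eq_zero]
      exact add_left_cancel ((hD y).symm.trans (Fox15.keyD k n y))
    have := Fox15.uniq1 k n _ h0 i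
    exact sub_eq_zero.mp this
  have hDbeq : ∀ (i : Fin n) (y), Db i y = Fox15.fox k n (Sum.inr i) y := by
    intro i y
    have h1 := hDb y
    have h2 := Fox15.keyDb k n y
    have h0 : ∑ j : Fin n, (Fox15.og k n (FreeGroup.of j)⁻¹ - 1)
        * (Db j y - Fox15.fox k n (Sum.inr j) y) = 0 := by
      simp only [mul_sub, Finset.sum_sub_distrib]
      rw [sub_eq_zero]
      exact add_left_cancel ((hDb y).symm.trans (Fox15.keyDb k n y))
    have := Fox15.uniq2 k n _ h0 i
    exact sub_eq_zero.mp this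
  obtain ⟨S, hSf, hSm, hSc⟩ := Fox15.good_all k n γ
  -- span S is invariant under all canonical derivatives
  have hstable : ∀ j, ∀ y ∈ Submodule.span k S, Fox15.fox k n j y ∈ Submodule.span k S := by
    intro j y hy
    induction hy using Submodule.span_induction with
    | mem x hx => exact hSc j x hx
    | zero => rw [map_zero]; exact zero_mem _
    | add a b _ _ ha hb => rw [map_add]; exact add_mem ha hb
    | smul r a _ ha => rw [map_smul]; exact Submodule.smul_mem _ _ ha
  have hfold : ∀ L : List (MonoidAlgebra k (FreeGroup (Fin n)) → MonoidAlgebra k (FreeGroup (Fin n))),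
      (∀ g ∈ L, (∃ i, g = D i) ∨ (∃ i, g = Db i)) →
      ∀ y ∈ Submodule.span k S, L.foldl (fun y g => g y) y ∈ Submodule.span k S := by
    intro L
    induction L with
    | nil => intro _ y hy; simpa using hy
    | cons g L ih =>
        intro hL y hy
        rw [List.foldl_cons]
        refine ih (fun g' hg' => hL g' (List.mem_cons_of_mem _ hg')) _ ?_
        rcases hL g List.mem_cons_self with ⟨i, rfl⟩ | ⟨i, rfl⟩
        · rw [hDeq i y]; exact hstable _ y hy
        · rw [hDbeq i y]; exact hstable _ y hy
  have hle : Submodule.span k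
      { x : MonoidAlgebra k (FreeGroup (Fin n)) |
        ∃ L : List (MonoidAlgebra k (FreeGroup (Fin n)) → MonoidAlgebra k (FreeGroup (Fin n))),
          (∀ g ∈ L, (∃ i, g = D i) ∨ (∃ i, g = Db i)) ∧
          x = L.foldl (fun y g => g y) γ } ≤ Submodule.span k S := by
    rw [Submodule.span_le]
    rintro x ⟨L, hL, rfl⟩
    exact hfold L hL γ hSm
  haveI : FiniteDimensional k (Submodule.span k S) := FiniteDimensional.span_of_finite k hSf
  exact Submodule.finiteDimensional_of_le hle
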